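/- Let R be a ring with 1, n ≥ 1, and A an n×n matrix over R. Let p(x) = λ_0 + λ_1 x + ⋯ + λ_{n−1} x^{n−1} + n!·x^n be the symmetric characteristic polynomial of A, and let C_0, C_1, …, C_n be the coefficient matrices determined by n·(xI − A)(xI − A)* = p(x)·I + C_0 + C_1 x + ⋯ + C_n x^n. Then the right Cayley–Hamilton identity (λ_0 I + C_0) + A(λ_1 I + C_1) + ⋯ + A^{n−1}(λ_{n−1} I + C_{n−1}) + A^n(n!·I + C_n) = 0 holds. -/

import Mathlib

open Polynomial in
/-- The preadjoint `A*` of an `n × n` matrix `A` over a (possibly noncommutative) ring `R`: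
its `(r, s)` entry is the sum, over all permutations `τ, ρ` of `Fin n` with `τ s = s` and
`ρ s = r`, of `sgn ρ` times the ordered product
`a_{τ(1),ρ(τ(1))} ⋯ a_{τ(s-1),ρ(τ(s-1))} · a_{τ(s+1),ρ(τ(s+1))} ⋯ a_{τ(n),ρ(τ(n))}`
(the factor at position `s` is omitted). -/
def Matrix.preadjoint {n : ℕ} {R : Type*} [Ring R] (A : Matrix (Fin n) (Fin n) R) :
    Matrix (Fin n) (Fin n) R :=
  fun r s =>
    ∑ τ : Equiv.Perm (Fin n), ∑ ρ : Equiv.Perm (Fin n),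
      if τ s = s ∧ ρ s = r then
        ((Equiv.Perm.sign ρ : ℤ)) •
          (((List.finRange n).filter (fun k => k ≠ s)).map
            (fun k => A (τ k) (ρ (τ k)))).prod
      else 0

open Polynomial in
/-- The characteristic matrix `x·I - A` of `A`, as a matrix over `R[x]`. -/
noncomputable def Matrix.charMat {n : ℕ} {R : Type*} [Ring R] (A : Matrix (Fin n) (Fin n) R) :
    Matrix (Fin n) (Fin n) R[X] :=
  (X : R[X]) • (1 : Matrix (Fin n) (Fin n) R[X]) - A.map C

/-- The symmetric determinant `s-det A = tr(A* · A) = tr(A · A*)`. -/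
def Matrix.sdet {n : ℕ} {R : Type*} [Ring R] (A : Matrix (Fin n) (Fin n) R) : R :=
  Matrix.trace (A.preadjoint * A)

open Polynomial in
/-- The symmetric characteristic polynomial `p(x) = s-det(x·I - A) ∈ R[x]`. -/
noncomputable def Matrix.sCharPoly {n : ℕ} {R : Type*} [Ring R] (A : Matrix (Fin n) (Fin n) R) : R[X] :=
  A.charMat.sdet

namespace RCH
open Polynomial
variable {n : ℕ} {R : Type*} [Ring R]

/-- coefficient matrix -/
noncomputable def coeffM (P : Matrix (Fin n) (Fin n) R[X]) (k : ℕ) :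
    Matrix (Fin n) (Fin n) R := fun i j => (P i j).coeff k

lemma charMat_mul (A : Matrix (Fin n) (Fin n) R) (Q : Matrix (Fin n) (Fin n) R[X]) :
    A.charMat * Q = (X : R[X]) • Q - (A.map C) * Q := by
  rw [Matrix.charMat, sub_mul, Matrix.smul_mul, one_mul]

lemma coeffM_map_mul (A : Matrix (Fin n) (Fin n) R) (Q : Matrix (Fin n) (Fin n) R[X]) (k : ℕ) :
    coeffM ((A.map C) * Q) k = A * coeffM Q k := by
  ext i j
  simp [coeffM, Matrix.mul_apply, finset_sum_coeff, coeff_C_mul]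

lemma coeffM_succ (A : Matrix (Fin n) (Fin n) R) (Q : Matrix (Fin n) (Fin n) R[X]) (k : ℕ) :
    coeffM (A.charMat * Q) (k+1) = coeffM Q k - A * coeffM Q (k+1) := by
  rw [charMat_mul, ← coeffM_map_mul A Q (k+1)]
  ext i j
  simp [coeffM, Matrix.sub_apply, Matrix.smul_apply, smul_eq_mul, coeff_X_mul]

lemma coeffM_zero (A : Matrix (Fin n) (Fin n) R) (Q : Matrix (Fin n) (Fin n) R[X]) :
    coeffM (A.charMat * Q) 0 = - (A * coeffM Q 0) := by
  rw [charMat_mul, ← coeffM_map_mul A Q 0]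
  ext i j
  simp [coeffM, Matrix.sub_apply, Matrix.smul_apply, smul_eq_mul, Matrix.neg_apply]

lemma telescope (A : Matrix (Fin n) (Fin n) R) (Q : Matrix (Fin n) (Fin n) R[X]) (m : ℕ) :
    ∑ i ∈ Finset.range (m+1), A ^ i * coeffM (A.charMat * Q) i
      = - (A ^ (m+1) * coeffM Q m) := by
  induction m with
  | zero => simp [coeffM_zero]
  | succ m ih =>
      rw [Finset.sum_range_succ, ih, coeffM_succ, mul_sub, ← mul_assoc, ← pow_succ]
      abel

lemma preadj_coeff_top (A : Matrix (Fin n) (Fin n) R) :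
    coeffM (A.charMat).preadjoint n = 0 := by
  ext i j
  simp only [coeffM, Matrix.preadjoint, finset_sum_coeff, Matrix.zero_apply]
  refine Finset.sum_eq_zero fun τ _ => Finset.sum_eq_zero fun ρ _ => ?_
  split_ifs with h
  · rw [coeff_smul, coeff_eq_zero_of_natDegree_lt, smul_zero]
    have hlen : (((List.finRange n).filter (fun k => k ≠ j))).length < n := by
      calc ((List.finRange n).filter (fun k => k ≠ j)).length
          < (List.finRange n).length := by
            rw [List.length_filter_lt_length_iff_exists]
            exact ⟨j, List.mem_finRange j, by simp⟩
        _ = n := List.length_finRange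
    refine lt_of_le_of_lt (natDegree_list_prod_le _) ?_
    refine lt_of_le_of_lt ?_ hlen
    rw [List.map_map]
    refine le_trans (List.sum_le_card_nsmul _ 1 ?_) ?_
    · intro x hx
      simp only [List.mem_map] at hx
      obtain ⟨k, -, rfl⟩ := hx
      simp only [Function.comp_apply, Matrix.charMat, Matrix.sub_apply, Matrix.smul_apply,
        Matrix.map_apply, smul_eq_mul]
      refine le_trans (natDegree_sub_le _ _) ?_
      refine max_le ?_ (by simp)
      rcases eq_or_ne (τ k) (ρ (τ k)) with h | h
      · rw [← h, Matrix.one_apply_eq, mul_one]; exact natDegree_X_le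
      · rw [Matrix.one_apply_ne h, mul_zero]; simp
    · simp
  · simp

end RCH


open Polynomial in
/-- Theorem 2.2 (right Cayley–Hamilton identity): with
`p(x) = λ₀ + λ₁x + ⋯ + λ_{n-1}x^{n-1} + n!·xⁿ` the symmetric characteristic polynomial of `A`
and `C₀, …, Cₙ` the coefficient matrices of `n·(xI - A)(xI - A)* - p(x)·I`, one has
`(λ₀I + C₀) + A(λ₁I + C₁) + ⋯ + Aⁿ(n!·I + Cₙ) = 0`. -/
theorem right_cayley_hamilton
    {n : ℕ} (hn : 1 ≤ n) {R : Type*} [Ring R] (A : Matrix (Fin n) (Fin n) R)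
    (C : ℕ → Matrix (Fin n) (Fin n) R)
    (hC : ∀ k, ∀ i j : Fin n,
      C k i j = ((n • (A.charMat * A.charMat.preadjoint)
        - A.sCharPoly • (1 : Matrix (Fin n) (Fin n) R[X])) i j).coeff k) :
    ∑ i ∈ Finset.range (n + 1),
      A ^ i * ((A.sCharPoly.coeff i) • (1 : Matrix (Fin n) (Fin n) R) + C i) = 0 := by
  have hco : ∀ k, (A.sCharPoly.coeff k) • (1 : Matrix (Fin n) (Fin n) R) + C k
      = n • RCH.coeffM (A.charMat * A.charMat.preadjoint) k := by
    intro k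
    ext a b
    rw [Matrix.add_apply, hC k a b]
    simp only [Matrix.sub_apply, Matrix.smul_apply, coeff_sub, coeff_smul,
      RCH.coeffM, Matrix.one_apply, smul_ite, smul_zero, smul_eq_mul, mul_one]
    rcases eq_or_ne a b with h | h <;> simp [h]
  calc ∑ i ∈ Finset.range (n+1),
        A ^ i * ((A.sCharPoly.coeff i) • (1 : Matrix (Fin n) (Fin n) R) + C i)
      = ∑ i ∈ Finset.range (n+1),
          n • (A ^ i * RCH.coeffM (A.charMat * A.charMat.preadjoint) i) := by
        refine Finset.sum_congr rfl fun i _ => ?_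
        rw [hco, mul_smul_comm]
    _ = n • ∑ i ∈ Finset.range (n+1),
          A ^ i * RCH.coeffM (A.charMat * A.charMat.preadjoint) i := Finset.smul_sum.symm
    _ = 0 := by
        rw [RCH.telescope, RCH.preadj_coeff_top, mul_zero, neg_zero, smul_zero]
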